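/- Let a₁, a₂, b₁, b₂, κ₁, κ₂ > 0, θ₁, θ₂ ≥ 0, and let r₁, r₂ be real numbers with θ₁ − 1 < r₁ < 0 and θ₂ − 1 < r₂ < 0. Let ε₀ ∈ (0,1), ρ₁, ρ₂ > 1, 0 < ρ < min(1/ρ₁, 1/ρ₂), and set b̃ᵢ := (1 − ε₀)(1 − ρᵢ ρ) bᵢ for i = 1,2. Assume (a₁/((1−ε₀)b₁))^{1/(r₁+1−θ₁)} · (a₂/((1−ε₀)b₂))^{1/κ₂} < 1, that (a₁/b̃₁)^{1/(r₁+1−θ₁)} · (a₂/b̃₂)^{1/κ₂} < 1, and that (r₁ + 1 − θ₁)/κ₁ = (r₁ + ρ₁)/(r₂ + ρ₂) = κ₂/(r₂ + 1 − θ₂). Then there exists δ₀ > 0 such that δ₀ b̃₁ ρ₁ x^{r₁+ρ₁} + b̃₂ ρ₂ y^{r₂+ρ₂} > δ₀ a₁ ρ₁ x^{θ₁+ρ₁−1} y^{κ₁} + a₂ ρ₂ y^{θ₂+ρ₂−1} x^{κ₂} for all x, y > 0. -/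

import Mathlib

open Real

/-- Young-type inequality: if `c ≤ (p/w)^w * (q/(1-w))^(1-w)` then
`c * (X^w * Y^(1-w)) ≤ p*X + q*Y` for positive `X, Y`. -/
lemma young_aux (w p q c X Y : ℝ) (hw : 0 < w) (hw1 : w < 1)
    (hp : 0 < p) (hq : 0 < q) (hX : 0 < X) (hY : 0 < Y)
    (hc : c ≤ (p / w) ^ w * (q / (1 - w)) ^ (1 - w)) :
    c * (X ^ w * Y ^ (1 - w)) ≤ p * X + q * Y := by
  have h1w : 0 < 1 - w := by linarith
  have hZ : 0 < X ^ w * Y ^ (1 - w) :=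
    mul_pos (Real.rpow_pos_of_pos hX w) (Real.rpow_pos_of_pos hY (1 - w))
  have key : (p / w) ^ w * (q / (1 - w)) ^ (1 - w) * (X ^ w * Y ^ (1 - w))
      ≤ p * X + q * Y := by
    have e : (p / w) ^ w * (q / (1 - w)) ^ (1 - w) * (X ^ w * Y ^ (1 - w))
        = (p * X / w) ^ w * (q * Y / (1 - w)) ^ (1 - w) := by
      rw [show p * X / w = (p / w) * X by ring, show q * Y / (1 - w) = (q / (1 - w)) * Y by ring,
        Real.mul_rpow (by positivity) hX.le, Real.mul_rpow (by positivity) hY.le]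
      ring
    rw [e]
    have h := Real.geom_mean_le_arith_mean2_weighted hw.le h1w.le
      (by positivity : (0:ℝ) ≤ p * X / w) (by positivity : (0:ℝ) ≤ q * Y / (1 - w))
      (by ring)
    calc (p * X / w) ^ w * (q * Y / (1 - w)) ^ (1 - w)
        ≤ w * (p * X / w) + (1 - w) * (q * Y / (1 - w)) := h
      _ = p * X + q * Y := by field_simp
  calc c * (X ^ w * Y ^ (1 - w))
      ≤ (p / w) ^ w * (q / (1 - w)) ^ (1 - w) * (X ^ w * Y ^ (1 - w)) :=
        mul_le_mul_of_nonneg_right hc hZ.le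
    _ ≤ p * X + q * Y := key

set_option maxHeartbeats 1000000 in
theorem lemma_t5_2 (a₁ a₂ b₁ b₂ κ₁ κ₂ θ₁ θ₂ r₁ r₂ ε₀ ρ₁ ρ₂ ρ : ℝ)
    (ha₁ : 0 < a₁) (ha₂ : 0 < a₂) (hb₁ : 0 < b₁) (hb₂ : 0 < b₂)
    (hκ₁ : 0 < κ₁) (hκ₂ : 0 < κ₂) (hθ₁ : 0 ≤ θ₁) (hθ₂ : 0 ≤ θ₂)
    (hr₁l : θ₁ - 1 < r₁) (hr₁u : r₁ < 0) (hr₂l : θ₂ - 1 < r₂) (hr₂u : r₂ < 0)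
    (hε₀ : 0 < ε₀) (hε₀' : ε₀ < 1)
    (hρ₁ : 1 < ρ₁) (hρ₂ : 1 < ρ₂) (hρ : 0 < ρ) (hρ' : ρ < min (1 / ρ₁) (1 / ρ₂))
    (h1 : (a₁ / ((1 - ε₀) * b₁)) ^ (1 / (r₁ + 1 - θ₁)) *
            (a₂ / ((1 - ε₀) * b₂)) ^ (1 / κ₂) < 1)
    (h2 : (a₁ / ((1 - ε₀) * (1 - ρ₁ * ρ) * b₁)) ^ (1 / (r₁ + 1 - θ₁)) *
            (a₂ / ((1 - ε₀) * (1 - ρ₂ * ρ) * b₂)) ^ (1 / κ₂) < 1)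
    (heq₁ : (r₁ + 1 - θ₁) / κ₁ = (r₁ + ρ₁) / (r₂ + ρ₂))
    (heq₂ : (r₁ + ρ₁) / (r₂ + ρ₂) = κ₂ / (r₂ + 1 - θ₂)) :
    ∃ δ₀ : ℝ, 0 < δ₀ ∧ ∀ x y : ℝ, 0 < x → 0 < y →
      δ₀ * ((1 - ε₀) * (1 - ρ₁ * ρ) * b₁) * ρ₁ * x ^ (r₁ + ρ₁) +
          ((1 - ε₀) * (1 - ρ₂ * ρ) * b₂) * ρ₂ * y ^ (r₂ + ρ₂) >
        δ₀ * a₁ * ρ₁ * x ^ (θ₁ + ρ₁ - 1) * y ^ κ₁ +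
          a₂ * ρ₂ * y ^ (θ₂ + ρ₂ - 1) * x ^ κ₂ := by
  -- basic positivity facts
  have hρρ₁ : ρ₁ * ρ < 1 := by
    have h := lt_of_lt_of_le hρ' (min_le_left _ _)
    calc ρ₁ * ρ < ρ₁ * (1 / ρ₁) := mul_lt_mul_of_pos_left h (by linarith)
      _ = 1 := by field_simp
  have hρρ₂ : ρ₂ * ρ < 1 := by
    have h := lt_of_lt_of_le hρ' (min_le_right _ _)
    calc ρ₂ * ρ < ρ₂ * (1 / ρ₂) := mul_lt_mul_of_pos_left h (by linarith)
      _ = 1 := by field_simp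
  set B₁ : ℝ := (1 - ε₀) * (1 - ρ₁ * ρ) * b₁ with hB₁def
  set B₂ : ℝ := (1 - ε₀) * (1 - ρ₂ * ρ) * b₂ with hB₂def
  have hB₁ : 0 < B₁ := mul_pos (mul_pos (by linarith) (by linarith)) hb₁
  have hB₂ : 0 < B₂ := mul_pos (mul_pos (by linarith) (by linarith)) hb₂
  -- exponents
  set s₁ : ℝ := r₁ + ρ₁ with hs₁def
  set s₂ : ℝ := r₂ + ρ₂ with hs₂def
  have hs₁ : 0 < s₁ := by simp only [hs₁def]; linarith
  have hs₂ : 0 < s₂ := by simp only [hs₂def]; linarith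
  have hα : 0 < r₁ + 1 - θ₁ := by linarith
  have hβ : 0 < r₂ + 1 - θ₂ := by linarith
  set u : ℝ := (θ₁ + ρ₁ - 1) / s₁ with hudef
  set w : ℝ := κ₂ / s₁ with hwdef
  have hu0 : 0 < u := div_pos (by linarith) hs₁
  have h1u : 1 - u = (r₁ + 1 - θ₁) / s₁ := by
    rw [hudef, eq_div_iff hs₁.ne', sub_mul, div_mul_cancel₀ _ hs₁.ne', hs₁def]; ring
  have hu1 : u < 1 := by
    have : 0 < 1 - u := by rw [h1u]; exact div_pos hα hs₁
    linarith
  have h1u0 : 0 < 1 - u := by linarith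
  have hw0 : 0 < w := div_pos hκ₂ hs₁
  have hcross₂ : s₁ * (r₂ + 1 - θ₂) = κ₂ * s₂ := by
    have h := heq₂
    field_simp at h
    linarith
  have hwalt : w = (r₂ + 1 - θ₂) / s₂ := by
    rw [hwdef, div_eq_div_iff hs₁.ne' hs₂.ne']
    linarith [hcross₂]
  have hw1 : w < 1 := by
    rw [hwalt, div_lt_one hs₂]
    simp only [hs₂def]; linarith
  have h1w : 0 < 1 - w := by linarith
  have hcross₁ : (r₁ + 1 - θ₁) * s₂ = κ₁ * s₁ := by
    have h := heq₁
    field_simp at h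
    linarith
  -- exponent identities
  have e1 : θ₁ + ρ₁ - 1 = u * s₁ := by rw [hudef]; field_simp
  have e2 : κ₁ = (1 - u) * s₂ := by
    rw [h1u]; field_simp; linarith [hcross₁]
  have e3 : κ₂ = w * s₁ := by rw [hwdef]; field_simp
  have e4 : θ₂ + ρ₂ - 1 = (1 - w) * s₂ := by
    rw [hwalt]; field_simp; ring
  -- coefficients
  set P : ℝ := B₁ * ρ₁ with hPdef
  set Q : ℝ := B₂ * ρ₂ with hQdef
  set A : ℝ := a₁ * ρ₁ with hAdef
  set B : ℝ := a₂ * ρ₂ with hBdef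
  have hP : 0 < P := mul_pos hB₁ (by linarith)
  have hQ : 0 < Q := mul_pos hB₂ (by linarith)
  have hA : 0 < A := mul_pos ha₁ (by linarith)
  have hB : 0 < B := mul_pos ha₂ (by linarith)
  set E : ℝ := (P / A) ^ (1 / (1 - u)) with hEdef
  have hE : 0 < E := Real.rpow_pos_of_pos (div_pos hP hA) _
  have hE1u : E ^ (1 - u) = P / A := by
    rw [hEdef, ← Real.rpow_mul (div_pos hP hA).le,
      show 1 / (1 - u) * (1 - u) = 1 by field_simp, Real.rpow_one]
  have hEu : E ^ u * E ^ (1 - u) = E := by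
    rw [← Real.rpow_add hE, show u + (1 - u) = 1 by ring, Real.rpow_one]
  set δ₀ : ℝ := E * w * Q / ((1 - u) * P) with hδ₀def
  have hδ₀ : 0 < δ₀ := by positivity
  have hδP : δ₀ * P = E * (w * Q / (1 - u)) := by
    rw [hδ₀def]; field_simp
  -- condition C1 (equality)
  have hEP : E * A = E ^ u * P := by
    have h' : E ^ (1 - u) * A = P := by rw [hE1u]; field_simp
    linear_combination E ^ u * h' - A * hEu
  have hC1 : δ₀ * A = (δ₀ * P) ^ u * (w * Q / (1 - u)) ^ (1 - u) := by
    rw [hδP, Real.mul_rpow hE.le (by positivity), mul_assoc,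
      ← Real.rpow_add (by positivity : (0:ℝ) < w * Q / (1 - u)),
      show u + (1 - u) = 1 by ring, Real.rpow_one]
    have h' : δ₀ * A = (E * A) * (w * Q) / ((1 - u) * P) := by rw [hδ₀def]; ring
    rw [h', hEP]
    field_simp
  -- condition C2 (strict), from h2
  have hAP : A / P = a₁ / B₁ := by
    rw [hAdef, hPdef, mul_div_mul_right _ _ (by linarith : ρ₁ ≠ 0)]
  have hBQ : B / Q = a₂ / B₂ := by
    rw [hBdef, hQdef, mul_div_mul_right _ _ (by linarith : ρ₂ ≠ 0)]
  have hexp : 1 / (r₁ + 1 - θ₁) * κ₂ = w / (1 - u) := by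
    rw [h1u, hwdef]; field_simp
  have hRS : (A / P) ^ (w / (1 - u)) * (B / Q) < 1 := by
    rw [hAP, hBQ]
    have hz : (0:ℝ) ≤ (a₁ / B₁) ^ (1 / (r₁ + 1 - θ₁)) * (a₂ / B₂) ^ (1 / κ₂) := by
      positivity
    have hpow : ((a₁ / B₁) ^ (1 / (r₁ + 1 - θ₁)) * (a₂ / B₂) ^ (1 / κ₂)) ^ κ₂ < 1 :=
      Real.rpow_lt_one hz h2 hκ₂
    calc (a₁ / B₁) ^ (w / (1 - u)) * (a₂ / B₂)
        = ((a₁ / B₁) ^ (1 / (r₁ + 1 - θ₁)) * (a₂ / B₂) ^ (1 / κ₂)) ^ κ₂ := by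
          rw [Real.mul_rpow (by positivity) (by positivity),
            ← Real.rpow_mul (by positivity : (0:ℝ) ≤ a₁ / B₁),
            ← Real.rpow_mul (by positivity : (0:ℝ) ≤ a₂ / B₂),
            hexp, one_div_mul_cancel hκ₂.ne', Real.rpow_one]
      _ < 1 := hpow
  have hXpos : 0 < (A / P) ^ (w / (1 - u)) := Real.rpow_pos_of_pos (div_pos hA hP) _
  have hEw : E ^ w = (P / A) ^ (w / (1 - u)) := by
    rw [hEdef, ← Real.rpow_mul (div_pos hP hA).le,
      show 1 / (1 - u) * w = w / (1 - u) by ring]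
  have hinvE : (A / P) ^ (w / (1 - u)) * (P / A) ^ (w / (1 - u)) = 1 := by
    rw [← Real.mul_rpow (div_pos hA hP).le (div_pos hP hA).le,
      show A / P * (P / A) = 1 by field_simp, Real.one_rpow]
  have hXinv : (P / A) ^ (w / (1 - u)) = ((A / P) ^ (w / (1 - u)))⁻¹ :=
    eq_inv_of_mul_eq_one_left (by linarith [hinvE, mul_comm ((A / P) ^ (w / (1 - u))) ((P / A) ^ (w / (1 - u)))])
  have hXB : (A / P) ^ (w / (1 - u)) * B < Q := by
    have h' : (A / P) ^ (w / (1 - u)) * B / Q < 1 := by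
      rw [show (A / P) ^ (w / (1 - u)) * B / Q = (A / P) ^ (w / (1 - u)) * (B / Q) by ring]
      exact hRS
    exact (div_lt_one hQ).mp h'
  have hBEQ : B < E ^ w * Q := by
    rw [hEw, hXinv, show ((A / P) ^ (w / (1 - u)))⁻¹ * Q = Q / ((A / P) ^ (w / (1 - u))) by ring,
      lt_div_iff₀ hXpos]
    rw [mul_comm]
    exact hXB
  -- the choice of δ₀ works
  refine ⟨δ₀, hδ₀, ?_⟩
  intro x y hx hy
  set X : ℝ := x ^ s₁ with hXdef
  set Y : ℝ := y ^ s₂ with hYdef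
  have hXp : 0 < X := Real.rpow_pos_of_pos hx _
  have hYp : 0 < Y := Real.rpow_pos_of_pos hy _
  have hrw1 : x ^ (θ₁ + ρ₁ - 1) = X ^ u := by
    rw [e1, mul_comm, Real.rpow_mul hx.le]
  have hrw2 : y ^ κ₁ = Y ^ (1 - u) := by
    rw [e2, mul_comm, Real.rpow_mul hy.le]
  have hrw3 : x ^ κ₂ = X ^ w := by
    rw [e3, mul_comm, Real.rpow_mul hx.le]
  have hrw4 : y ^ (θ₂ + ρ₂ - 1) = Y ^ (1 - w) := by
    rw [e4, mul_comm, Real.rpow_mul hy.le]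
  rw [hrw1, hrw2, hrw3, hrw4]
  have ineq1 : (δ₀ * A) * (X ^ u * Y ^ (1 - u)) ≤ (u * (δ₀ * P)) * X + (w * Q) * Y := by
    apply young_aux u (u * (δ₀ * P)) (w * Q) (δ₀ * A) X Y hu0 hu1 (by positivity)
      (by positivity) hXp hYp
    rw [show u * (δ₀ * P) / u = δ₀ * P by field_simp]
    exact le_of_eq hC1
  have ineq2 : B * (X ^ w * Y ^ (1 - w)) < ((1 - u) * (δ₀ * P)) * X + ((1 - w) * Q) * Y := by
    have hT : B < ((1 - u) * (δ₀ * P) / w) ^ w * ((1 - w) * Q / (1 - w)) ^ (1 - w) := by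
      rw [show (1 - u) * (δ₀ * P) / w = E * Q by rw [hδP]; field_simp,
        show (1 - w) * Q / (1 - w) = Q by field_simp,
        Real.mul_rpow hE.le hQ.le, mul_assoc, ← Real.rpow_add hQ,
        show w + (1 - w) = 1 by ring, Real.rpow_one]
      exact hBEQ
    have hZ : 0 < X ^ w * Y ^ (1 - w) :=
      mul_pos (Real.rpow_pos_of_pos hXp w) (Real.rpow_pos_of_pos hYp (1 - w))
    calc B * (X ^ w * Y ^ (1 - w))
        < (((1 - u) * (δ₀ * P) / w) ^ w * ((1 - w) * Q / (1 - w)) ^ (1 - w)) *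
            (X ^ w * Y ^ (1 - w)) := by
          exact mul_lt_mul_of_pos_right hT hZ
      _ ≤ ((1 - u) * (δ₀ * P)) * X + ((1 - w) * Q) * Y :=
          young_aux w ((1 - u) * (δ₀ * P)) ((1 - w) * Q) _ X Y hw0 hw1 (by positivity)
            (by positivity) hXp hYp le_rfl
  have hsum : δ₀ * A * (X ^ u * Y ^ (1 - u)) + B * (X ^ w * Y ^ (1 - w)) <
      δ₀ * P * X + Q * Y := by
    calc δ₀ * A * (X ^ u * Y ^ (1 - u)) + B * (X ^ w * Y ^ (1 - w))
        < ((u * (δ₀ * P)) * X + (w * Q) * Y) +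
            (((1 - u) * (δ₀ * P)) * X + ((1 - w) * Q) * Y) :=
          add_lt_add_of_le_of_lt ineq1 ineq2
      _ = δ₀ * P * X + Q * Y := by ring
  calc δ₀ * a₁ * ρ₁ * X ^ u * Y ^ (1 - u) + a₂ * ρ₂ * Y ^ (1 - w) * X ^ w
      = δ₀ * A * (X ^ u * Y ^ (1 - u)) + B * (X ^ w * Y ^ (1 - w)) := by
        rw [hAdef, hBdef]; ring
    _ < δ₀ * P * X + Q * Y := hsum
    _ = δ₀ * B₁ * ρ₁ * X + B₂ * ρ₂ * Y := by rw [hPdef, hQdef]; ring
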